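/- Let S be a decision rule system with n(S) > 0. Then max{d(S), β_EAR(S)} ≤ h_EAR(S) ≤ d(S)·β_EAR⁺(S). -/

import Mathlib

/- Common formal framework for decision rule systems and decision trees /
   acyclic decision graphs, following Durdymyradov & Moshkov. -/

attribute [local instance] Classical.propDecidable

noncomputable section

namespace DRS

/-- A decision rule `(a_{i₁}=δ₁) ∧ ⋯ ∧ (a_{i_m}=δ_m) → σ`:
`K` is the finite set of equations (attribute index, value), `rhs` is σ. -/
structure Rule where
  K : Finset (ℕ × ℕ)
  rhs : ℕ

/-- Well-formedness of a rule: the attributes on its left-hand side are pairwise different. -/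
def Rule.WF (r : Rule) : Prop := ∀ p ∈ r.K, ∀ q ∈ r.K, p.1 = q.1 → p = q

/-- A(r): the set of attributes of a rule. -/
def Rule.attrs (r : Rule) : Finset ℕ := r.K.image Prod.fst

/-- The length m of a rule. -/
def Rule.len (r : Rule) : ℕ := r.K.card

/-- A(S) -/
def attrs (S : Finset Rule) : Finset ℕ := S.biUnion Rule.attrs

/-- n(S) -/
def nPar (S : Finset Rule) : ℕ := (attrs S).card

/-- d(S): the maximum length of a rule of S. -/
def dPar (S : Finset Rule) : ℕ := S.sup Rule.len

/-- D(S): the set of right-hand sides. -/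
def rhsSet (S : Finset Rule) : Finset ℕ := S.image Rule.rhs

/-- V_S(a_i) -/
def VS (S : Finset Rule) (i : ℕ) : Finset ℕ :=
  ((S.biUnion Rule.K).filter fun p => p.1 = i).image Prod.snd

/-- k(S) -/
def kPar (S : Finset Rule) : ℕ := (attrs S).sup fun i => (VS S i).card

/-- Attribute values in trees are `Option ℕ`; `none` plays the role of the special value `*`.
`allowed S false i` is (the lift of) `V_S(a_i)`, and `allowed S true i` is `EV_S(a_i)`. -/
def allowed (S : Finset Rule) (ext : Bool) (i : ℕ) : Finset (Option ℕ) :=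
  (VS S i).image some ∪ (if ext then {none} else ∅)

/-- Consistency of an equation system over ω ∪ {*}. -/
def ConsistentE (E : Finset (ℕ × Option ℕ)) : Prop :=
  ∀ p ∈ E, ∀ q ∈ E, p.1 = q.1 → p.2 = q.2

/-- Lift the left-hand side of a rule to an equation system over ω ∪ {*}. -/
def liftK (K : Finset (ℕ × ℕ)) : Finset (ℕ × Option ℕ) :=
  K.image fun p => (p.1, some p.2)

/-- A finite directed labeled graph: the nodes are `0, …, n-1`, with a distinguished root,
each node carries either an attribute (working node) or a set of rules (terminal node),
and edges are labeled with elements of ω ∪ {*}. -/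
structure DGraph where
  n : ℕ
  root : ℕ
  label : ℕ → ℕ ⊕ Finset Rule
  edges : Finset (ℕ × Option ℕ × ℕ)

namespace DGraph

def step (G : DGraph) (u v : ℕ) : Prop := ∃ l, (u, l, v) ∈ G.edges

/-- The graph has no directed cycles. -/
def Acyclic (G : DGraph) : Prop := ∀ v, ¬ Relation.TransGen G.step v v

/-- A node is terminal if no edge leaves it. -/
def IsTerminal (G : DGraph) (v : ℕ) : Prop := ∀ e ∈ G.edges, e.1 ≠ v

/-- The set of rules attached to a (terminal) node. -/
def termSet (G : DGraph) (v : ℕ) : Finset Rule :=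
  Sum.elim (fun _ => (∅ : Finset Rule)) id (G.label v)

/-- `G` is an acyclic decision graph over the rule system `S`;
`ext = false` : branching over `V_S` (o-type), `ext = true` : branching over `EV_S` (e-type).
Terminal nodes are labeled with subsets of S; each working node is labeled with an
attribute `a` of `A(S)` and has exactly one leaving edge for every element of
`V_S(a)` (resp. `EV_S(a)`), the edges leaving it being labeled with these
pairwise different elements. -/
def IsDG (G : DGraph) (S : Finset Rule) (ext : Bool) : Prop :=
  G.root < G.n ∧
  (∀ e ∈ G.edges, e.1 < G.n ∧ e.2.2 < G.n) ∧
  G.Acyclic ∧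
  (∀ v < G.n,
    if G.IsTerminal v then
      ∃ Z : Finset Rule, G.label v = Sum.inr Z ∧ Z ⊆ S
    else
      ∃ a : ℕ, G.label v = Sum.inl a ∧ a ∈ attrs S ∧
        (∀ l : Option ℕ, (∃ w, (v, l, w) ∈ G.edges) ↔ l ∈ allowed S ext a) ∧
        (∀ l w w', (v, l, w) ∈ G.edges → (v, l, w') ∈ G.edges → w = w'))

/-- `G` is a finite directed tree with root: the root has no entering edge and every
other node has exactly one entering edge (together with acyclicity this makes the
graph a rooted tree). -/
def IsTree (G : DGraph) : Prop :=
  (∀ e ∈ G.edges, e.2.2 ≠ G.root) ∧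
  (∀ v < G.n, v ≠ G.root → ∃! e, e ∈ G.edges ∧ e.2.2 = v)

/-- `chainFrom G v p t`: the list `p` of (node, leaving-edge-label) pairs forms a
directed path in `G` starting at `v` and ending at `t`. -/
def chainFrom (G : DGraph) : ℕ → List (ℕ × Option ℕ) → ℕ → Prop
  | v, [], t => v = t
  | v, e :: rest, t => e.1 = v ∧ ∃ w, (v, e.2, w) ∈ G.edges ∧ chainFrom G w rest t

/-- A complete path: from the root to a terminal node; it is recorded by the list of
its working nodes with the labels of the edges taken, together with its terminal node. -/
def IsCompletePath (G : DGraph) (p : List (ℕ × Option ℕ)) (t : ℕ) : Prop :=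
  G.chainFrom G.root p t ∧ G.IsTerminal t ∧ t < G.n

/-- K(ξ): the equation system associated with a complete path. -/
def pathEqs (G : DGraph) (p : List (ℕ × Option ℕ)) : Finset (ℕ × Option ℕ) :=
  (p.filterMap fun e =>
    Sum.elim (fun a => some (a, e.2)) (fun _ => none) (G.label e.1)).toFinset

/-- L(Γ): the number of nodes. -/
def size (G : DGraph) : ℕ := G.n

/-- T(Γ): the number of terminal nodes labeled with pairwise different sets of rules. -/
def tCount (G : DGraph) : ℕ :=
  (((Finset.range G.n).filter fun v => G.IsTerminal v).image fun v => G.termSet v).card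

/-- h(Γ): the maximum number of working nodes on a complete path. -/
def depth (G : DGraph) : ℕ :=
  sSup {m | ∃ p t, G.IsCompletePath p t ∧ p.length = m}

/-- Path conditions for (the solutions of) the problems All Rules / EAll Rules. -/
def SolvesAR (G : DGraph) (S : Finset Rule) : Prop :=
  ∀ p t, G.IsCompletePath p t → ConsistentE (G.pathEqs p) →
    (∀ r ∈ G.termSet t, liftK r.K ⊆ G.pathEqs p) ∧
    (∀ r ∈ S, r ∉ G.termSet t → ¬ ConsistentE (liftK r.K ∪ G.pathEqs p))

/-- Path conditions for the problems All Decisions / EAll Decisions. -/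
def SolvesAD (G : DGraph) (S : Finset Rule) : Prop :=
  ∀ p t, G.IsCompletePath p t → ConsistentE (G.pathEqs p) →
    (∀ r ∈ G.termSet t, liftK r.K ⊆ G.pathEqs p) ∧
    (∀ r ∈ S, r ∉ G.termSet t → r.rhs ∉ (G.termSet t).image Rule.rhs →
      ¬ ConsistentE (liftK r.K ∪ G.pathEqs p))

/-- Path conditions for the problems Some Rules / ESome Rules. -/
def SolvesSR (G : DGraph) (S : Finset Rule) : Prop :=
  ∀ p t, G.IsCompletePath p t → ConsistentE (G.pathEqs p) →
    (∀ r ∈ G.termSet t, liftK r.K ⊆ G.pathEqs p) ∧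
    (G.termSet t = ∅ → ∀ r ∈ S, ¬ ConsistentE (liftK r.K ∪ G.pathEqs p))

end DGraph

/-- Γ is a decision tree over S solving AR(S) (an o-tree). -/
def TreeSolvesAR (S : Finset Rule) (G : DGraph) : Prop :=
  G.IsDG S false ∧ G.IsTree ∧ G.SolvesAR S
/-- Γ is a decision tree over S solving EAR(S) (an e-tree). -/
def TreeSolvesEAR (S : Finset Rule) (G : DGraph) : Prop :=
  G.IsDG S true ∧ G.IsTree ∧ G.SolvesAR S
/-- Γ is a decision tree over S solving AD(S) (an o-tree). -/
def TreeSolvesAD (S : Finset Rule) (G : DGraph) : Prop :=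
  G.IsDG S false ∧ G.IsTree ∧ G.SolvesAD S
/-- Γ is a decision tree over S solving EAD(S) (an e-tree). -/
def TreeSolvesEAD (S : Finset Rule) (G : DGraph) : Prop :=
  G.IsDG S true ∧ G.IsTree ∧ G.SolvesAD S
/-- Γ is a decision tree over S solving SR(S) (an o-tree). -/
def TreeSolvesSR (S : Finset Rule) (G : DGraph) : Prop :=
  G.IsDG S false ∧ G.IsTree ∧ G.SolvesSR S
/-- Γ is a decision tree over S solving ESR(S) (an e-tree). -/
def TreeSolvesESR (S : Finset Rule) (G : DGraph) : Prop :=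
  G.IsDG S true ∧ G.IsTree ∧ G.SolvesSR S

/-- L_AR(S): minimum number of nodes of a decision tree over S solving AR(S). -/
def L_AR (S : Finset Rule) : ℕ := sInf {m | ∃ G : DGraph, TreeSolvesAR S G ∧ G.size = m}
def L_EAR (S : Finset Rule) : ℕ := sInf {m | ∃ G : DGraph, TreeSolvesEAR S G ∧ G.size = m}
def L_AD (S : Finset Rule) : ℕ := sInf {m | ∃ G : DGraph, TreeSolvesAD S G ∧ G.size = m}
def L_EAD (S : Finset Rule) : ℕ := sInf {m | ∃ G : DGraph, TreeSolvesEAD S G ∧ G.size = m}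
def L_SR (S : Finset Rule) : ℕ := sInf {m | ∃ G : DGraph, TreeSolvesSR S G ∧ G.size = m}
def L_ESR (S : Finset Rule) : ℕ := sInf {m | ∃ G : DGraph, TreeSolvesESR S G ∧ G.size = m}

/-- T_AR(S): minimum number of differently-labeled terminal nodes of a decision tree
over S solving AR(S); similarly for the other problems. -/
def T_AR (S : Finset Rule) : ℕ := sInf {m | ∃ G : DGraph, TreeSolvesAR S G ∧ G.tCount = m}
def T_EAR (S : Finset Rule) : ℕ := sInf {m | ∃ G : DGraph, TreeSolvesEAR S G ∧ G.tCount = m}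
def T_AD (S : Finset Rule) : ℕ := sInf {m | ∃ G : DGraph, TreeSolvesAD S G ∧ G.tCount = m}
def T_EAD (S : Finset Rule) : ℕ := sInf {m | ∃ G : DGraph, TreeSolvesEAD S G ∧ G.tCount = m}
def T_SR (S : Finset Rule) : ℕ := sInf {m | ∃ G : DGraph, TreeSolvesSR S G ∧ G.tCount = m}
def T_ESR (S : Finset Rule) : ℕ := sInf {m | ∃ G : DGraph, TreeSolvesESR S G ∧ G.tCount = m}

/-- h_AR(S): minimum depth of a decision tree over S solving AR(S); similarly for the others. -/
def h_AR (S : Finset Rule) : ℕ := sInf {m | ∃ G : DGraph, TreeSolvesAR S G ∧ G.depth = m}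
def h_EAR (S : Finset Rule) : ℕ := sInf {m | ∃ G : DGraph, TreeSolvesEAR S G ∧ G.depth = m}
def h_AD (S : Finset Rule) : ℕ := sInf {m | ∃ G : DGraph, TreeSolvesAD S G ∧ G.depth = m}
def h_EAD (S : Finset Rule) : ℕ := sInf {m | ∃ G : DGraph, TreeSolvesEAD S G ∧ G.depth = m}
def h_SR (S : Finset Rule) : ℕ := sInf {m | ∃ G : DGraph, TreeSolvesSR S G ∧ G.depth = m}
def h_ESR (S : Finset Rule) : ℕ := sInf {m | ∃ G : DGraph, TreeSolvesESR S G ∧ G.depth = m}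

/-- L^DG_SR(S): minimum number of nodes of an acyclic decision graph solving SR(S). -/
def LDG_SR (S : Finset Rule) : ℕ :=
  sInf {m | ∃ G : DGraph, G.IsDG S false ∧ G.SolvesSR S ∧ G.size = m}
/-- L^DG_ESR(S): minimum number of nodes of an acyclic decision graph solving ESR(S). -/
def LDG_ESR (S : Finset Rule) : ℕ :=
  sInf {m | ∃ G : DGraph, G.IsDG S true ∧ G.SolvesSR S ∧ G.size = m}

/-- A node cover of the hypergraph G(S). -/
def IsNodeCover (S : Finset Rule) (B : Finset ℕ) : Prop :=
  B ⊆ attrs S ∧ ∀ r ∈ S, (Rule.attrs r).Nonempty → (Rule.attrs r ∩ B).Nonempty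

/-- β(S): the minimum cardinality of a node cover of the hypergraph G(S). -/
def beta (S : Finset Rule) : ℕ := sInf {c | ∃ B, IsNodeCover S B ∧ B.card = c}

/-- S⁺: the subsystem of S consisting of all rules of length d(S). -/
def Splus (S : Finset Rule) : Finset Rule := S.filter fun r => r.len = dPar S

/-- β⁺(S) = β(S⁺). -/
def betaPlus (S : Finset Rule) : ℕ := beta (Splus S)

/-- The rule r_α : delete from the left-hand side of r all equations belonging to α. -/
def Rule.restrict (r : Rule) (α : Finset (ℕ × Option ℕ)) : Rule :=
  ⟨r.K.filter fun p => (p.1, some p.2) ∉ α, r.rhs⟩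

/-- S_α : the system of the rules r_α for all r ∈ S with K(r) ∪ α consistent. -/
def restrict (S : Finset Rule) (α : Finset (ℕ × Option ℕ)) : Finset Rule :=
  (S.filter fun r => ConsistentE (liftK r.K ∪ α)).image fun r => r.restrict α

/-- E_C(S): consistent equation systems whose attributes are in A(S) and whose
values belong to V_S (ext = false) resp. EV_S (ext = true). -/
def ESys (S : Finset Rule) (ext : Bool) : Set (Finset (ℕ × Option ℕ)) :=
  {α | ConsistentE α ∧ ∀ p ∈ α, p.1 ∈ attrs S ∧ p.2 ∈ allowed S ext p.1}

/-- I_SR(S). -/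
def I_SR (S : Finset Rule) : Finset Rule :=
  if ∃ r ∈ S, r.len = 0 then S.filter fun r => r.len = 0 else S

/-- D₀(S): the right-hand sides of the rules of S of length 0. -/
def D0 (S : Finset Rule) : Finset ℕ := (S.filter fun r => r.len = 0).image Rule.rhs

/-- I_AD(S). -/
def I_AD (S : Finset Rule) : Finset Rule :=
  S.filter fun r => r.len = 0 ∨ r.rhs ∉ D0 S

def betaC (S : Finset Rule) (ext : Bool) : ℕ :=
  sSup {b | ∃ α ∈ ESys S ext, beta (restrict S α) = b}
def betaCplus (S : Finset Rule) (ext : Bool) : ℕ :=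
  sSup {b | ∃ α ∈ ESys S ext, betaPlus (restrict S α) = b}
def betaI (S : Finset Rule) (I : Finset Rule → Finset Rule) : ℕ :=
  sSup {b | ∃ α ∈ ESys S true, beta (I (restrict S α)) = b}
def betaIplus (S : Finset Rule) (I : Finset Rule → Finset Rule) : ℕ :=
  sSup {b | ∃ α ∈ ESys S true, betaPlus (I (restrict S α)) = b}

def beta_AR (S : Finset Rule) : ℕ := betaC S false
def beta_AD (S : Finset Rule) : ℕ := betaC S false
def beta_SR (S : Finset Rule) : ℕ := betaC S false
def beta_EAR (S : Finset Rule) : ℕ := betaC S true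
def beta_ARplus (S : Finset Rule) : ℕ := betaCplus S false
def beta_ADplus (S : Finset Rule) : ℕ := betaCplus S false
def beta_SRplus (S : Finset Rule) : ℕ := betaCplus S false
def beta_EARplus (S : Finset Rule) : ℕ := betaCplus S true
def beta_EAD (S : Finset Rule) : ℕ := betaI S I_AD
def beta_EADplus (S : Finset Rule) : ℕ := betaIplus S I_AD
def beta_ESR (S : Finset Rule) : ℕ := betaI S I_SR
def beta_ESRplus (S : Finset Rule) : ℕ := betaIplus S I_SR

/-- R_SR(S). -/
def R_SR (S : Finset Rule) : Finset Rule :=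
  S.filter fun r => ¬ ∃ r' ∈ S, r'.K ⊂ r.K

/-- R_AD(S). -/
def R_AD (S : Finset Rule) : Finset Rule :=
  S.filter fun r => ¬ ∃ r' ∈ S, r'.K ⊂ r.K ∧ r'.rhs = r.rhs

/-- A reduced decision rule system. -/
def Reduced (S : Finset Rule) : Prop :=
  attrs S ⊆ Finset.range (nPar S + 1) ∧
  rhsSet S ⊆ Finset.range ((rhsSet S).card + 1) ∧
  (∀ i ∈ attrs S, VS S i ⊆ Finset.range (kPar S + 1)) ∧
  1 ≤ dPar S

/-- Length of the binary representation of a natural number. -/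
def bitLen (m : ℕ) : ℕ := max 1 (Nat.size m)

/-- The length of the word "(a⟨i⟩=⟨δ⟩)" encoding one equation. -/
def eqLen (p : ℕ × ℕ) : ℕ := 4 + bitLen p.1 + bitLen p.2

/-- The length of the word encoding one rule (with the "∧" signs and "→"). -/
def Rule.wordLen (r : Rule) : ℕ :=
  (∑ p ∈ r.K, eqLen p) + (r.K.card - 1) + 1 + bitLen r.rhs

/-- size(S): the length of the word representing S (with ";" separating the rules). -/
def sizeS (S : Finset Rule) : ℕ := (∑ r ∈ S, r.wordLen) + (S.card - 1)

/-! ### Generic small lemmas -/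

lemma ConsistentE.mono {s t : Finset (ℕ × Option ℕ)} (h : s ⊆ t) (ht : ConsistentE t) :
    ConsistentE s := fun p hp q hq hpq => ht p (h hp) q (h hq) hpq

lemma none_mem_allowed (S : Finset Rule) (a : ℕ) : (none : Option ℕ) ∈ allowed S true a := by
  simp [allowed]

lemma liftK_consistent {r : Rule} (h : r.WF) : ConsistentE (liftK r.K) := by
  intro p hp q hq hpq
  simp only [liftK, Finset.mem_image] at hp hq
  obtain ⟨x, hx, rfl⟩ := hp
  obtain ⟨y, hy, rfl⟩ := hq
  simp only at hpq ⊢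
  rw [h x hx y hy hpq]

lemma card_liftK (K : Finset (ℕ × ℕ)) : (liftK K).card = K.card := by
  rw [liftK, Finset.card_image_of_injective]
  intro p q h
  simpa [Prod.ext_iff] using h

lemma attrs_restrict_subset (S : Finset Rule) (α : Finset (ℕ × Option ℕ)) :
    attrs (restrict S α) ⊆ attrs S := by
  intro x hx
  simp only [attrs, Finset.mem_biUnion] at hx ⊢
  obtain ⟨r', hr', hx⟩ := hx
  simp only [restrict, Finset.mem_image, Finset.mem_filter] at hr'
  obtain ⟨r, ⟨hr, _⟩, rfl⟩ := hr'
  refine ⟨r, hr, ?_⟩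
  simp only [Rule.attrs, Rule.restrict, Finset.mem_image] at hx ⊢
  obtain ⟨p, hp, rfl⟩ := hx
  exact ⟨p, (Finset.mem_filter.1 hp).1, rfl⟩

lemma attrs_mono {S T : Finset Rule} (h : S ⊆ T) : attrs S ⊆ attrs T :=
  Finset.biUnion_subset_biUnion_of_subset_left _ h

lemma attrs_cover (T : Finset Rule) : IsNodeCover T (attrs T) := by
  refine ⟨Finset.Subset.refl _, fun r hr hne => ?_⟩
  obtain ⟨a, ha⟩ := hne
  exact ⟨a, Finset.mem_inter.2 ⟨ha, Finset.mem_biUnion.2 ⟨r, hr, ha⟩⟩⟩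

lemma beta_le_card_attrs (T : Finset Rule) : beta T ≤ (attrs T).card :=
  Nat.sInf_le ⟨attrs T, attrs_cover T, rfl⟩

lemma exists_minCover (T : Finset Rule) : ∃ B, IsNodeCover T B ∧ B.card = beta T := by
  have h : {c | ∃ B, IsNodeCover T B ∧ B.card = c}.Nonempty :=
    ⟨(attrs T).card, attrs T, attrs_cover T, rfl⟩
  exact Nat.sInf_mem h

/-- a minimum node cover -/
def minCover (T : Finset Rule) : Finset ℕ := (exists_minCover T).choose

lemma minCover_spec (T : Finset Rule) :
    IsNodeCover T (minCover T) ∧ (minCover T).card = beta T := (exists_minCover T).choose_spec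

lemma betaPlus_restrict_le (S : Finset Rule) {α : Finset (ℕ × Option ℕ)}
    (hα : α ∈ ESys S true) : betaPlus (restrict S α) ≤ beta_EARplus S := by
  have hb : ∀ b ∈ {b | ∃ α ∈ ESys S true, betaPlus (restrict S α) = b}, b ≤ nPar S := by
    rintro b ⟨β', hβ', rfl⟩
    calc betaPlus (restrict S β') ≤ (attrs (Splus (restrict S β'))).card :=
          beta_le_card_attrs _
      _ ≤ (attrs S).card := Finset.card_le_card
          ((attrs_mono (Finset.filter_subset _ _)).trans (attrs_restrict_subset S β'))
  exact le_csSup ⟨nPar S, hb⟩ ⟨α, hα, rfl⟩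

lemma restrict_empty (S : Finset Rule) (hwf : ∀ r ∈ S, r.WF) : restrict S ∅ = S := by
  have h1 : ∀ r : Rule, r.restrict ∅ = r := by
    intro r; simp [Rule.restrict]
  have h2 : S.filter (fun r => ConsistentE (liftK r.K ∪ ∅)) = S := by
    refine Finset.filter_true_of_mem fun r hr => ?_
    simpa using liftK_consistent (hwf r hr)
  rw [restrict, h2]
  simp only [h1, Finset.image_id']


/-! ### Abstract strategy trees -/

inductive ATree : Type where
  | leaf : Finset Rule → ATree
  | node : ℕ → (Option ℕ → ATree) → ATree

inductive Reaches (S : Finset Rule) : ATree → Finset (ℕ × Option ℕ) → ℕ → Finset Rule → Prop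
  | leaf (Z : Finset Rule) : Reaches S (.leaf Z) ∅ 0 Z
  | node {a : ℕ} {f : Option ℕ → ATree} {l : Option ℕ} {E m Z} :
      l ∈ allowed S true a → Reaches S (f l) E m Z →
      Reaches S (.node a f) (insert (a, l) E) (m + 1) Z

def ATree.Good (S : Finset Rule) : ATree → Prop
  | .leaf Z => Z ⊆ S
  | .node a f => a ∈ attrs S ∧ ∀ l, (f l).Good S

def subAt (S : Finset Rule) : ATree → List (Option ℕ) → Option ATree
  | t, [] => some t
  | ATree.leaf _, _ :: _ => none
  | ATree.node a f, l :: p => if l ∈ allowed S true a then subAt S (f l) p else none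

def poss (S : Finset Rule) : ATree → Finset (List (Option ℕ))
  | ATree.leaf _ => {[]}
  | ATree.node a f => insert [] ((allowed S true a).biUnion fun l => (poss S (f l)).image (l :: ·))

lemma mem_poss (S : Finset Rule) : ∀ (t : ATree) (p : List (Option ℕ)),
    p ∈ poss S t ↔ (subAt S t p).isSome := by
  intro t
  induction t with
  | leaf Z => intro p; cases p <;> simp [poss, subAt]
  | node a f ih =>
    intro p
    cases p with
    | nil => simp [poss, subAt]
    | cons l q =>
      simp only [poss, Finset.mem_insert, Finset.mem_biUnion, Finset.mem_image, subAt]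
      constructor
      · rintro (h | ⟨l', hl', q', hq', h⟩)
        · simp at h
        · injection h with h1 h2
          subst h1; subst h2
          rw [if_pos hl']
          exact (ih _ _).1 hq'
      · intro h
        by_cases hl : l ∈ allowed S true a
        · rw [if_pos hl] at h
          exact Or.inr ⟨l, hl, q, (ih l q).2 h, rfl⟩
        · rw [if_neg hl] at h; simp at h

lemma subAt_append_singleton {S : Finset Rule} : ∀ (t : ATree) (p : List (Option ℕ))
    {a f l}, subAt S t p = some (ATree.node a f) → l ∈ allowed S true a →
    subAt S t (p ++ [l]) = some (f l) := by
  intro t p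
  induction p generalizing t with
  | nil =>
    intro a f l h hl
    simp only [subAt] at h
    cases h
    simp [subAt, if_pos hl]
  | cons x q ih =>
    intro a f l h hl
    cases t with
    | leaf Z => simp [subAt] at h
    | node b g =>
      simp only [subAt, List.cons_append] at h ⊢
      by_cases hx : x ∈ allowed S true b
      · rw [if_pos hx] at h ⊢; exact ih _ h hl
      · rw [if_neg hx] at h; simp at h

lemma subAt_last {S : Finset Rule} : ∀ (p : List (Option ℕ)) (t : ATree) {l : Option ℕ},
    (subAt S t (p ++ [l])).isSome →
    ∃ a f, subAt S t p = some (ATree.node a f) ∧ l ∈ allowed S true a ∧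
      subAt S t (p ++ [l]) = some (f l) := by
  intro p
  induction p with
  | nil =>
    intro t l h
    cases t with
    | leaf Z => simp [subAt] at h
    | node a f =>
      simp only [List.nil_append, subAt] at h ⊢
      by_cases hl : l ∈ allowed S true a
      · exact ⟨a, f, rfl, hl, by rw [if_pos hl]⟩
      · rw [if_neg hl] at h; simp at h
  | cons x q ih =>
    intro t l h
    cases t with
    | leaf Z => simp [subAt] at h
    | node b g =>
      simp only [List.cons_append, subAt] at h ⊢
      by_cases hx : x ∈ allowed S true b
      · rw [if_pos hx] at h
        obtain ⟨a, f, h1, h2, h3⟩ := ih _ h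
        exact ⟨a, f, by simp [if_pos hx, h1], h2, by simpa [if_pos hx] using h3⟩
      · rw [if_neg hx] at h; simp at h

lemma subAt_good {S : Finset Rule} : ∀ (p : List (Option ℕ)) (t : ATree) {st : ATree},
    t.Good S → subAt S t p = some st → st.Good S := by
  intro p
  induction p with
  | nil => intro t st h hs; simp only [subAt] at hs; cases hs; exact h
  | cons x q ih =>
    intro t st h hs
    cases t with
    | leaf Z => simp [subAt] at hs
    | node b g =>
      simp only [subAt] at hs
      by_cases hx : x ∈ allowed S true b
      · rw [if_pos hx] at hs; exact ih _ (h.2 x) hs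
      · rw [if_neg hx] at hs; simp at hs

/-! ### Compiling a strategy tree to a DGraph -/

def pidx (S : Finset Rule) (t : ATree) (p : List (Option ℕ)) : ℕ :=
  if h : p ∈ poss S t then ((poss S t).equivFin ⟨p, h⟩ : Fin _) else 0

def posOf (S : Finset Rule) (t : ATree) (i : ℕ) : List (Option ℕ) :=
  if h : i < (poss S t).card then ((poss S t).equivFin.symm ⟨i, h⟩ : (poss S t)) else []

def compiled (S : Finset Rule) (t : ATree) : DGraph where
  n := (poss S t).card
  root := pidx S t []
  label := fun i =>
    match subAt S t (posOf S t i) with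
    | some (ATree.leaf Z) => Sum.inr Z
    | some (ATree.node a _) => Sum.inl a
    | none => Sum.inr ∅
  edges := (poss S t).biUnion fun p =>
    (match subAt S t p with
      | some (ATree.node a _) => allowed S true a
      | _ => (∅ : Finset (Option ℕ))).image fun l => (pidx S t p, l, pidx S t (p ++ [l]))

variable {S : Finset Rule} {t : ATree} {p q : List (Option ℕ)} {i : ℕ}

lemma compiled_n : (compiled S t).n = (poss S t).card := rfl

lemma pidx_eq (hp : p ∈ poss S t) :
    pidx S t p = ((poss S t).equivFin ⟨p, hp⟩ : Fin _) := by
  unfold pidx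
  rw [dif_pos hp]

lemma posOf_eq (h : i < (poss S t).card) :
    posOf S t i = ((poss S t).equivFin.symm ⟨i, h⟩ : (poss S t)) := by
  unfold posOf
  rw [dif_pos h]

lemma pidx_lt (hp : p ∈ poss S t) : pidx S t p < (compiled S t).n := by
  rw [pidx_eq hp, compiled_n]
  exact ((poss S t).equivFin ⟨p, hp⟩).2

lemma posOf_pidx (hp : p ∈ poss S t) : posOf S t (pidx S t p) = p := by
  have hlt : pidx S t p < (poss S t).card := pidx_lt hp
  rw [posOf_eq hlt]
  have : (⟨pidx S t p, hlt⟩ : Fin (poss S t).card) = (poss S t).equivFin ⟨p, hp⟩ :=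
    Fin.ext (pidx_eq hp)
  rw [this, Equiv.symm_apply_apply]

lemma posOf_mem (hi : i < (compiled S t).n) : posOf S t i ∈ poss S t := by
  rw [compiled_n] at hi
  rw [posOf_eq hi]
  exact ((poss S t).equivFin.symm ⟨i, hi⟩).2

lemma pidx_posOf (hi : i < (compiled S t).n) : pidx S t (posOf S t i) = i := by
  rw [compiled_n] at hi
  have hmem : posOf S t i ∈ poss S t := by
    rw [posOf_eq hi]; exact ((poss S t).equivFin.symm ⟨i, hi⟩).2
  rw [pidx_eq hmem]
  have : (⟨posOf S t i, hmem⟩ : (poss S t)) = (poss S t).equivFin.symm ⟨i, hi⟩ :=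
    Subtype.ext (posOf_eq hi)
  rw [this, Equiv.apply_symm_apply]

lemma pidx_inj (hp : p ∈ poss S t) (hq : q ∈ poss S t) (h : pidx S t p = pidx S t q) :
    p = q := by
  have := posOf_pidx hp
  rw [h, posOf_pidx hq] at this
  exact this.symm

lemma mem_edges_iff {e : ℕ × Option ℕ × ℕ} :
    e ∈ (compiled S t).edges ↔ ∃ p a f, p ∈ poss S t ∧ subAt S t p = some (ATree.node a f) ∧
      ∃ l ∈ allowed S true a, e = (pidx S t p, l, pidx S t (p ++ [l])) := by
  simp only [compiled, Finset.mem_biUnion, Finset.mem_image]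
  constructor
  · rintro ⟨p, hp, l, hl, rfl⟩
    rcases hst : subAt S t p with _ | st
    · rw [hst] at hl; simp at hl
    · cases st with
      | leaf Z => rw [hst] at hl; simp at hl
      | node a f =>
        rw [hst] at hl
        exact ⟨p, a, f, hp, hst, l, hl, rfl⟩
  · rintro ⟨p, a, f, hp, hst, l, hl, rfl⟩
    exact ⟨p, hp, l, by rw [hst]; exact hl, rfl⟩

lemma label_eq_leaf {Z : Finset Rule}
    (hst : subAt S t (posOf S t i) = some (ATree.leaf Z)) :
    (compiled S t).label i = Sum.inr Z := by
  show (match subAt S t (posOf S t i) with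
    | some (ATree.leaf Z) => Sum.inr Z
    | some (ATree.node a _) => Sum.inl a
    | none => Sum.inr ∅) = _
  rw [hst]

lemma label_eq_node {a : ℕ} {f : Option ℕ → ATree}
    (hst : subAt S t (posOf S t i) = some (ATree.node a f)) :
    (compiled S t).label i = Sum.inl a := by
  show (match subAt S t (posOf S t i) with
    | some (ATree.leaf Z) => Sum.inr Z
    | some (ATree.node a _) => Sum.inl a
    | none => Sum.inr ∅) = _
  rw [hst]

lemma edge_source_pos {u : ℕ} {l : Option ℕ} {w : ℕ} (hu : u < (compiled S t).n)
    (h : (u, l, w) ∈ (compiled S t).edges) :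
    ∃ a f, subAt S t (posOf S t u) = some (ATree.node a f) ∧ l ∈ allowed S true a ∧
      w = pidx S t (posOf S t u ++ [l]) := by
  obtain ⟨p, a, f, hp, hst, l', hl', he⟩ := mem_edges_iff.1 h
  obtain ⟨h1, h2, h3⟩ : u = pidx S t p ∧ l = l' ∧ w = pidx S t (p ++ [l']) := by
    injection he with e1 e2; injection e2 with e2 e3; exact ⟨e1, e2, e3⟩
  subst h1 h2 h3
  rw [posOf_pidx hp]
  exact ⟨a, f, hst, hl', rfl⟩

lemma terminal_iff_leaf (hi : i < (compiled S t).n) :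
    (compiled S t).IsTerminal i ↔ ∃ Z, subAt S t (posOf S t i) = some (ATree.leaf Z) := by
  have hmem := posOf_mem hi
  have hsome := (mem_poss S t _).1 hmem
  rcases hst : subAt S t (posOf S t i) with _ | st
  · rw [hst] at hsome; simp at hsome
  constructor
  · intro hterm
    cases st with
    | leaf Z => exact ⟨Z, rfl⟩
    | node a f =>
      exfalso
      have : (pidx S t (posOf S t i), (none : Option ℕ),
          pidx S t (posOf S t i ++ [none])) ∈ (compiled S t).edges :=
        mem_edges_iff.2 ⟨_, a, f, hmem, hst, none, none_mem_allowed S a, rfl⟩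
      rw [pidx_posOf hi] at this
      exact hterm _ this rfl
  · rintro ⟨Z, hZ⟩
    intro e he hei
    obtain ⟨p, a, f, hp, hst', l, hl, rfl⟩ := mem_edges_iff.1 he
    simp only at hei
    have hpq : p = posOf S t i := pidx_inj hp hmem (by rw [hei, pidx_posOf hi])
    rw [hpq, hst] at hst'
    simp only [Option.some.injEq] at hst' hZ
    rw [hZ] at hst'
    simp at hst'


/-! ### The compiled graph is a decision tree -/

lemma nil_mem_poss : ([] : List (Option ℕ)) ∈ poss S t := by
  cases t <;> simp [poss]

lemma subAt_nil : subAt S t [] = some t := by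
  cases t <;> rfl

lemma transGen_measure {α : Type*} {r : α → α → Prop} {m : α → ℕ}
    (h : ∀ a b, r a b → m a < m b) {a b : α} (hr : Relation.TransGen r a b) : m a < m b := by
  induction hr with
  | single h1 => exact h _ _ h1
  | tail _ h2 ih => exact lt_trans ih (h _ _ h2)

lemma mem_edges_elim {u : ℕ} {l : Option ℕ} {w : ℕ}
    (he : (u, l, w) ∈ (compiled S t).edges) :
    ∃ p a f, p ∈ poss S t ∧ subAt S t p = some (ATree.node a f) ∧ l ∈ allowed S true a ∧
      u = pidx S t p ∧ w = pidx S t (p ++ [l]) ∧ p ++ [l] ∈ poss S t ∧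
      subAt S t (p ++ [l]) = some (f l) := by
  obtain ⟨p, a, f, hp, hst, l', hl', heq⟩ := mem_edges_iff.1 he
  obtain ⟨h1, h2, h3⟩ : u = pidx S t p ∧ l = l' ∧ w = pidx S t (p ++ [l']) := by
    injection heq with e1 e2; injection e2 with e2 e3; exact ⟨e1, e2, e3⟩
  subst h2
  have hsub : subAt S t (p ++ [l]) = some (f l) := subAt_append_singleton t p hst hl'
  exact ⟨p, a, f, hp, hst, hl', h1, h3, by rw [mem_poss, hsub]; rfl, hsub⟩

lemma compiled_isDG (hg : t.Good S) : (compiled S t).IsDG S true := by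
  refine ⟨pidx_lt nil_mem_poss, ?_, ?_, ?_⟩
  · rintro ⟨u, l, w⟩ he
    obtain ⟨p, a, f, hp, hst, hl, hu, hw, hmem, _⟩ := mem_edges_elim he
    subst hu hw
    exact ⟨pidx_lt hp, pidx_lt hmem⟩
  · intro v hv
    have hstep : ∀ u w, (compiled S t).step u w →
        (posOf S t u).length < (posOf S t w).length := by
      rintro u w ⟨l, he⟩
      obtain ⟨p, a, f, hp, hst, hl, hu, hw, hmem, _⟩ := mem_edges_elim he
      subst hu hw
      rw [posOf_pidx hp, posOf_pidx hmem]
      simp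
    exact lt_irrefl _ (transGen_measure hstep hv)
  · intro v hv
    have hmem := posOf_mem hv
    have hsome := (mem_poss S t _).1 hmem
    rcases hst : subAt S t (posOf S t v) with _ | st
    · rw [hst] at hsome; simp at hsome
    have hgood : st.Good S := subAt_good _ _ hg hst
    cases st with
    | leaf Z =>
      rw [if_pos ((terminal_iff_leaf hv).2 ⟨Z, hst⟩)]
      exact ⟨Z, label_eq_leaf hst, hgood⟩
    | node a f =>
      rw [if_neg (by
        intro hterm
        obtain ⟨Z, hZ⟩ := (terminal_iff_leaf hv).1 hterm
        rw [hst] at hZ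
        simp at hZ)]
      refine ⟨a, label_eq_node hst, hgood.1, ?_, ?_⟩
      · intro l
        constructor
        · rintro ⟨w, hw⟩
          obtain ⟨a', f', hst', hl', rfl⟩ := edge_source_pos hv hw
          rw [hst] at hst'
          obtain ⟨rfl, rfl⟩ : a' = a ∧ f' = f := by
            injection hst' with h; injection h with h1 h2; exact ⟨h1.symm, h2.symm⟩
          exact hl'
        · intro hl
          refine ⟨pidx S t (posOf S t v ++ [l]), mem_edges_iff.2 ⟨posOf S t v, a, f, hmem, hst,
            l, hl, ?_⟩⟩
          rw [pidx_posOf hv]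
      · intro l w w' hw hw'
        obtain ⟨a1, f1, hst1, _, rfl⟩ := edge_source_pos hv hw
        obtain ⟨a2, f2, hst2, _, rfl⟩ := edge_source_pos hv hw'
        rfl

lemma compiled_isTree : (compiled S t).IsTree := by
  constructor
  · rintro ⟨u, l, w⟩ he heq
    obtain ⟨p, a, f, hp, hst, hl, hu, hw, hmem, _⟩ := mem_edges_elim he
    simp only at heq
    rw [heq] at hw
    have : p ++ [l] = [] := pidx_inj hmem nil_mem_poss (by rw [← hw]; rfl)
    simp at this
  · intro v hv hvroot
    have hmem := posOf_mem hv
    set p := posOf S t v with hpdef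
    have hpne : p ≠ [] := by
      intro h
      apply hvroot
      have : v = pidx S t p := (pidx_posOf hv).symm
      rw [this, h]; rfl
    have hsplit : p.dropLast ++ [p.getLast hpne] = p := List.dropLast_append_getLast hpne
    have hsome : (subAt S t (p.dropLast ++ [p.getLast hpne])).isSome := by
      rw [hsplit]; exact (mem_poss S t _).1 hmem
    obtain ⟨a, f, hnode, hallow, _⟩ := subAt_last _ _ hsome
    have hdrop : p.dropLast ∈ poss S t := by rw [mem_poss, hnode]; rfl
    have hvpidx : v = pidx S t (p.dropLast ++ [p.getLast hpne]) := by
      rw [hsplit]; exact (pidx_posOf hv).symm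
    refine ⟨(pidx S t p.dropLast, p.getLast hpne, v), ⟨?_, rfl⟩, ?_⟩
    · exact mem_edges_iff.2 ⟨p.dropLast, a, f, hdrop, hnode, p.getLast hpne, hallow, by
        rw [hvpidx]⟩
    · rintro ⟨u2, l2, w2⟩ ⟨he2, htgt⟩
      simp only at htgt
      obtain ⟨p2, a2, f2, hp2, hst2, hl2, hu2, hw2, hmem2, _⟩ := mem_edges_elim he2
      subst hu2
      rw [htgt] at hw2
      have heqp : p2 ++ [l2] = p.dropLast ++ [p.getLast hpne] := by
        rw [hsplit]
        exact pidx_inj hmem2 hmem (by rw [← hw2]; exact (pidx_posOf hv).symm)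
      have hlen : p2.length = p.dropLast.length := by
        have := congrArg List.length heqp
        simp only [List.length_append, List.length_singleton] at this
        omega
      obtain ⟨h1, h2⟩ := List.append_inj heqp hlen
      have h2' : l2 = p.getLast hpne := by injection h2
      subst h1 h2'
      rw [htgt]

/-! ### Complete paths of the compiled graph give Reaches -/

lemma chain_reaches : ∀ (P : List (ℕ × Option ℕ)) (p : List (Option ℕ)) (st : ATree)
    (tt : ℕ), p ∈ poss S t → subAt S t p = some st →
    (compiled S t).chainFrom (pidx S t p) P tt → (compiled S t).IsTerminal tt →
    tt < (compiled S t).n →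
    ∃ E Z, Reaches S st E P.length Z ∧ (compiled S t).pathEqs P = E ∧
      (compiled S t).termSet tt = Z := by
  intro P
  induction P with
  | nil =>
    intro p st tt hp hst hchain hterm htt
    have heq : pidx S t p = tt := hchain
    obtain ⟨Z, hZ⟩ := (terminal_iff_leaf htt).1 hterm
    rw [← heq, posOf_pidx hp, hst] at hZ
    obtain rfl : st = ATree.leaf Z := by injection hZ
    refine ⟨∅, Z, Reaches.leaf Z, by simp [DGraph.pathEqs], ?_⟩
    have hlab : (compiled S t).label tt = Sum.inr Z := by
      apply label_eq_leaf
      rw [← heq, posOf_pidx hp, hst]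
    rw [DGraph.termSet, hlab]
    rfl
  | cons e P' ih =>
    intro p st tt hp hst hchain hterm htt
    obtain ⟨he1, w, hw, hchain'⟩ := hchain
    obtain ⟨p', a, f, hp', hst', hallow, hu, hw', hmem', hsub'⟩ := mem_edges_elim hw
    have hpp : p = p' := pidx_inj hp hp' hu
    subst hpp
    rw [hst] at hst'
    obtain rfl : st = ATree.node a f := by injection hst'
    subst hw'
    obtain ⟨E₀, Z, hr, hpe, hts⟩ := ih (p ++ [e.2]) (f e.2) tt hmem' hsub' hchain' hterm htt
    refine ⟨insert (a, e.2) E₀, Z, Reaches.node hallow hr, ?_, hts⟩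
    have hlab : (compiled S t).label e.1 = Sum.inl a := by
      rw [he1]
      apply label_eq_node
      rw [posOf_pidx hp]
      exact hst
    rw [DGraph.pathEqs, List.filterMap_cons, hlab]
    show ((a, e.2) :: _).toFinset = _
    rw [List.toFinset_cons]
    show insert (a, e.2) ((compiled S t).pathEqs P') = insert (a, e.2) E₀
    rw [hpe]

lemma complete_path_reaches {P : List (ℕ × Option ℕ)} {tt : ℕ}
    (h : (compiled S t).IsCompletePath P tt) :
    ∃ E Z, Reaches S t E P.length Z ∧ (compiled S t).pathEqs P = E ∧
      (compiled S t).termSet tt = Z := by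
  obtain ⟨hchain, hterm, htt⟩ := h
  have hchain' : (compiled S t).chainFrom (pidx S t []) P tt := hchain
  exact chain_reaches P [] t tt nil_mem_poss subAt_nil hchain' hterm htt

/-! ### The greedy strategy -/

def build (S : Finset Rule) : ℕ → List ℕ → Finset (ℕ × Option ℕ) → ATree
  | 0, [], α => .leaf (S.filter fun r => ConsistentE (liftK r.K ∪ α))
  | fuel + 1, [], α =>
      if dPar (restrict S α) = 0 then
        .leaf (S.filter fun r => ConsistentE (liftK r.K ∪ α))
      else
        build S fuel (minCover (Splus (restrict S α))).toList α
  | fuel, a :: B, α => .node a fun l => build S fuel B (insert (a, l) α)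
  termination_by fuel B => (fuel, B.length)

lemma build_good (S : Finset Rule) : ∀ fuel B α, (∀ b ∈ B, b ∈ attrs S) →
    (build S fuel B α).Good S := by
  intro fuel
  induction fuel with
  | zero =>
    intro B
    induction B with
    | nil => intro α _; rw [build]; exact Finset.filter_subset _ _
    | cons b B ih =>
      intro α hB
      rw [build]
      exact ⟨hB b (by simp), fun l => ih _ fun x hx => hB x (by simp [hx])⟩
  | succ f ihf =>
    intro B
    induction B with
    | nil =>
      intro α _
      rw [build]
      split
      · exact Finset.filter_subset _ _
      · refine ihf _ _ fun b hb => ?_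
        rw [Finset.mem_toList] at hb
        have h1 := (minCover_spec (Splus (restrict S α))).1.1 hb
        exact (attrs_mono (Finset.filter_subset _ _)).trans (attrs_restrict_subset S α) h1
    | cons b B ih =>
      intro α hB
      rw [build]
      exact ⟨hB b (by simp), fun l => ih _ fun x hx => hB x (by simp [hx])⟩

/-! ### The round lemma and the main properties of the strategy -/

lemma round_lemma (S : Finset Rule) (α E' : Finset (ℕ × Option ℕ)) (cov : Finset ℕ)
    (hcov : IsNodeCover (Splus (restrict S α)) cov)
    (hall : ∀ b ∈ cov, ∃ l, (b, l) ∈ E')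
    (hd : dPar (restrict S α) ≠ 0) :
    dPar (restrict S (α ∪ E')) < dPar (restrict S α) := by
  rw [dPar, Finset.sup_lt_iff (by simpa [bot_eq_zero] using Nat.pos_of_ne_zero hd : (⊥ : ℕ) < dPar (restrict S α))]
  intro r' hr'
  simp only [restrict, Finset.mem_image, Finset.mem_filter] at hr'
  obtain ⟨r, ⟨hrS, hcons⟩, rfl⟩ := hr'
  have hconsα : ConsistentE (liftK r.K ∪ α) :=
    ConsistentE.mono (Finset.union_subset_union_right Finset.subset_union_left) hcons
  have hmemα : r.restrict α ∈ restrict S α := by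
    simp only [restrict, Finset.mem_image, Finset.mem_filter]
    exact ⟨r, ⟨hrS, hconsα⟩, rfl⟩
  have hsub : (r.restrict (α ∪ E')).K ⊆ (r.restrict α).K := by
    intro x hx
    simp only [Rule.restrict, Finset.mem_filter] at hx ⊢
    exact ⟨hx.1, fun hmem => hx.2 (Finset.mem_union_left _ hmem)⟩
  have hlen_le : (r.restrict α).len ≤ dPar (restrict S α) := Finset.le_sup hmemα
  rcases lt_or_eq_of_le hlen_le with hlt | heq
  · exact lt_of_le_of_lt (Finset.card_le_card hsub) hlt
  · have hplus : r.restrict α ∈ Splus (restrict S α) :=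
      Finset.mem_filter.2 ⟨hmemα, heq⟩
    have hKne : (r.restrict α).K.Nonempty := by
      rw [← Finset.card_pos]
      show 0 < (r.restrict α).len
      omega
    have hAne : (Rule.attrs (r.restrict α)).Nonempty := hKne.image _
    obtain ⟨b, hb⟩ := hcov.2 _ hplus hAne
    rw [Finset.mem_inter] at hb
    obtain ⟨hbA, hbcov⟩ := hb
    rw [Rule.attrs, Finset.mem_image] at hbA
    obtain ⟨⟨b', δ⟩, hbδ, hbb⟩ := hbA
    simp only at hbb
    subst hbb
    have hbK : (b', δ) ∈ r.K := Finset.mem_of_mem_filter _ hbδ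
    have hbα : ((b' : ℕ), some δ) ∉ α := (Finset.mem_filter.1 hbδ).2
    obtain ⟨l, hlE⟩ := hall b' hbcov
    have h1 : ((b' : ℕ), some δ) ∈ liftK r.K ∪ (α ∪ E') :=
      Finset.mem_union_left _ (Finset.mem_image.2 ⟨(b', δ), hbK, rfl⟩)
    have h2 : ((b' : ℕ), l) ∈ liftK r.K ∪ (α ∪ E') :=
      Finset.mem_union_right _ (Finset.mem_union_right _ hlE)
    have hlδ : some δ = l := hcons _ h1 _ h2 rfl
    have hmemαE : ((b' : ℕ), some δ) ∈ α ∪ E' := Finset.mem_union_right _ (hlδ ▸ hlE)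
    have hnot : (b', δ) ∉ (r.restrict (α ∪ E')).K := by
      rw [Rule.restrict, Finset.mem_filter]
      rintro ⟨-, hno⟩
      exact hno hmemαE
    have : (r.restrict (α ∪ E')).K ⊆ ((r.restrict α).K).erase (b', δ) :=
      Finset.subset_erase.2 ⟨hsub, hnot⟩
    calc (r.restrict (α ∪ E')).len ≤ (((r.restrict α).K).erase (b', δ)).card :=
          Finset.card_le_card this
      _ < (r.restrict α).K.card := Finset.card_erase_lt_of_mem hbδ
      _ = dPar (restrict S α) := heq

lemma build_main (S : Finset Rule) : ∀ fuel B α E m Z,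
    Reaches S (build S fuel B α) E m Z →
    (∀ b ∈ B, b ∈ attrs S) →
    (∀ p ∈ α, p.1 ∈ attrs S ∧ p.2 ∈ allowed S true p.1) →
    (∀ E' : Finset (ℕ × Option ℕ), E'.image Prod.fst = B.toFinset →
      dPar (restrict S (α ∪ E')) ≤ fuel) →
    m ≤ B.length + fuel * beta_EARplus S ∧
    Z = S.filter (fun r => ConsistentE (liftK r.K ∪ (α ∪ E))) ∧
    dPar (restrict S (α ∪ E)) = 0 := by
  have cons_step : ∀ fuel b B',
      (∀ α E m Z, Reaches S (build S fuel B' α) E m Z →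
        (∀ x ∈ B', x ∈ attrs S) →
        (∀ p ∈ α, p.1 ∈ attrs S ∧ p.2 ∈ allowed S true p.1) →
        (∀ E' : Finset (ℕ × Option ℕ), E'.image Prod.fst = B'.toFinset →
          dPar (restrict S (α ∪ E')) ≤ fuel) →
        m ≤ B'.length + fuel * beta_EARplus S ∧
        Z = S.filter (fun r => ConsistentE (liftK r.K ∪ (α ∪ E))) ∧
        dPar (restrict S (α ∪ E)) = 0) →
      ∀ α E m Z, Reaches S (build S fuel (b :: B') α) E m Z →
        (∀ x ∈ b :: B', x ∈ attrs S) →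
        (∀ p ∈ α, p.1 ∈ attrs S ∧ p.2 ∈ allowed S true p.1) →
        (∀ E' : Finset (ℕ × Option ℕ), E'.image Prod.fst = (b :: B').toFinset →
          dPar (restrict S (α ∪ E')) ≤ fuel) →
        m ≤ (b :: B').length + fuel * beta_EARplus S ∧
        Z = S.filter (fun r => ConsistentE (liftK r.K ∪ (α ∪ E))) ∧
        dPar (restrict S (α ∪ E)) = 0 := by
    intro fuel b B' ih α E m Z h hB hα hd
    rw [build] at h
    cases h with
    | @node _ _ l E₀ m₀ _ hl hr =>
      have hα' : ∀ p ∈ insert (b, l) α, p.1 ∈ attrs S ∧ p.2 ∈ allowed S true p.1 := by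
        intro p hp
        rcases Finset.mem_insert.1 hp with rfl | hp
        · exact ⟨hB b (by simp), hl⟩
        · exact hα p hp
      have hins : ∀ E'' : Finset (ℕ × Option ℕ),
          insert (b, l) α ∪ E'' = α ∪ insert (b, l) E'' := by
        intro E''
        rw [Finset.insert_union, Finset.union_insert]
      have hd' : ∀ E'' : Finset (ℕ × Option ℕ), E''.image Prod.fst = B'.toFinset →
          dPar (restrict S (insert (b, l) α ∪ E'')) ≤ fuel := by
        intro E'' hE''
        rw [hins]
        apply hd
        rw [Finset.image_insert, hE'']
        simp
      obtain ⟨h1, h2, h3⟩ := ih _ _ _ _ hr (fun x hx => hB x (by simp [hx])) hα' hd'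
      refine ⟨by simp only [List.length_cons]; omega, ?_, ?_⟩
      · rw [h2, hins]
      · rw [hins] at h3; exact h3
  intro fuel
  induction fuel with
  | zero =>
    intro B
    induction B with
    | nil =>
      intro α E m Z h hB hα hd
      rw [build] at h
      cases h
      have hd0 := hd ∅ (by simp)
      refine ⟨by simp, by simp, by simpa using hd0⟩
    | cons b B' ih => exact cons_step 0 b B' ih
  | succ f ihf =>
    intro B
    induction B with
    | nil =>
      intro α E m Z h hB hα hd
      rw [build] at h
      split at h
      · next hd0 =>
        cases h
        refine ⟨by simp, by simp, by simpa using hd0⟩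
      · next hdne =>
        have hne : (restrict S α).Nonempty := by
          by_contra hempty
          rw [Finset.not_nonempty_iff_eq_empty] at hempty
          apply hdne
          rw [hempty]
          rfl
        have hconsα : ConsistentE α := by
          obtain ⟨r', hr'⟩ := hne
          simp only [restrict, Finset.mem_image, Finset.mem_filter] at hr'
          obtain ⟨r, ⟨-, hcons⟩, -⟩ := hr'
          exact ConsistentE.mono Finset.subset_union_right hcons
        have hESys : α ∈ ESys S true := ⟨hconsα, hα⟩
        set cov := minCover (Splus (restrict S α)) with hcovdef
        have hcovspec := minCover_spec (Splus (restrict S α))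
        have hBcov : ∀ x ∈ cov.toList, x ∈ attrs S := by
          intro x hx
          rw [Finset.mem_toList] at hx
          exact (attrs_mono (Finset.filter_subset _ _)).trans (attrs_restrict_subset S α)
            (hcovspec.1.1 hx)
        have hd' : ∀ E' : Finset (ℕ × Option ℕ), E'.image Prod.fst = cov.toList.toFinset →
            dPar (restrict S (α ∪ E')) ≤ f := by
          intro E' hE'
          rw [Finset.toList_toFinset] at hE'
          have hall : ∀ x ∈ cov, ∃ l, (x, l) ∈ E' := by
            intro x hx
            rw [← hE', Finset.mem_image] at hx
            obtain ⟨p, hp, hpx⟩ := hx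
            exact ⟨p.2, by rw [← hpx]; exact hp⟩
          have := round_lemma S α E' cov hcovspec.1 hall hdne
          have hdle := hd ∅ (by simp)
          simp only [Finset.union_empty] at hdle
          omega
        obtain ⟨h1, h2, h3⟩ := ihf cov.toList α E m Z h hBcov hα hd'
        refine ⟨?_, h2, h3⟩
        have hclen : cov.toList.length = betaPlus (restrict S α) := by
          rw [Finset.length_toList, hcovspec.2]
          rfl
        have hble : betaPlus (restrict S α) ≤ beta_EARplus S := betaPlus_restrict_le S hESys
        rw [hclen] at h1
        calc m ≤ betaPlus (restrict S α) + f * beta_EARplus S := h1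
          _ ≤ beta_EARplus S + f * beta_EARplus S := by omega
          _ = (f + 1) * beta_EARplus S := by ring
          _ = [].length + (f + 1) * beta_EARplus S := by simp
    | cons b B' ih => exact cons_step (f + 1) b B' ih

/-! ### The upper bound -/

lemma upper_bound (S : Finset Rule) (hwf : ∀ r ∈ S, r.WF) :
    ∃ G : DGraph, TreeSolvesEAR S G ∧ G.depth ≤ dPar S * beta_EARplus S := by
  set t := build S (dPar S) [] ∅ with ht
  have hgood : t.Good S := build_good S _ _ _ (by simp)
  have hd0 : ∀ E' : Finset (ℕ × Option ℕ), E'.image Prod.fst = ([] : List ℕ).toFinset →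
      dPar (restrict S (∅ ∪ E')) ≤ dPar S := by
    intro E' hE'
    simp only [List.toFinset_nil, Finset.image_eq_empty] at hE'
    subst hE'
    simp only [Finset.union_empty]
    rw [restrict_empty S hwf]
  have hmain : ∀ E m Z, Reaches S t E m Z →
      m ≤ dPar S * beta_EARplus S ∧
      Z = S.filter (fun r => ConsistentE (liftK r.K ∪ E)) ∧
      dPar (restrict S E) = 0 := by
    intro E m Z hr
    obtain ⟨h1, h2, h3⟩ := build_main S (dPar S) [] ∅ E m Z hr (by simp) (by simp) hd0
    refine ⟨by simpa using h1, ?_, by simpa using h3⟩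
    simpa using h2
  refine ⟨compiled S t, ⟨compiled_isDG hgood, compiled_isTree, ?_⟩, ?_⟩
  · intro P tt hcp hcons
    obtain ⟨E, Z, hr, hpe, hts⟩ := complete_path_reaches hcp
    obtain ⟨-, hZ, hdE⟩ := hmain E P.length Z hr
    constructor
    · intro r hrZ
      rw [hts, hZ, Finset.mem_filter] at hrZ
      obtain ⟨hrS, hrc⟩ := hrZ
      have hmem : r.restrict E ∈ restrict S E := by
        simp only [restrict, Finset.mem_image, Finset.mem_filter]
        exact ⟨r, ⟨hrS, hrc⟩, rfl⟩
      have hlen : (r.restrict E).len = 0 :=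
        Nat.eq_zero_of_le_zero (hdE ▸ Finset.le_sup hmem)
      have hfil : (r.restrict E).K = ∅ := Finset.card_eq_zero.1 hlen
      rw [hpe]
      intro q hq
      rw [liftK, Finset.mem_image] at hq
      obtain ⟨x, hx, rfl⟩ := hq
      by_contra hnotin
      have : x ∈ (r.restrict E).K := by
        rw [Rule.restrict, Finset.mem_filter]
        exact ⟨hx, hnotin⟩
      rw [hfil] at this
      simp at this
    · intro r hrS hrZ
      rw [hts, hZ, Finset.mem_filter] at hrZ
      rw [hpe]
      intro hc
      exact hrZ ⟨hrS, hc⟩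
  · apply csSup_le'
    rintro m ⟨P, tt, hcp, rfl⟩
    obtain ⟨E, Z, hr, -, -⟩ := complete_path_reaches hcp
    exact (hmain E P.length Z hr).1

lemma h_EAR_le (S : Finset Rule) (hwf : ∀ r ∈ S, r.WF) :
    h_EAR S ≤ dPar S * beta_EARplus S := by
  obtain ⟨G, hG, hdep⟩ := upper_bound S hwf
  exact le_trans (Nat.sInf_le ⟨G, hG, rfl⟩) hdep

/-! ### Runs in an arbitrary decision tree -/

lemma exists_run {S : Finset Rule} (G : DGraph) (hdg : G.IsDG S true) (choice : ℕ → Option ℕ)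
    (hch : ∀ a ∈ attrs S, choice a ∈ allowed S true a) :
    ∃ P tt, G.IsCompletePath P tt ∧
      ∀ e ∈ P, ∀ a : ℕ, G.label e.1 = Sum.inl a → e.2 = choice a := by
  obtain ⟨hroot, hedge, hacyc, hnode⟩ := hdg
  have hwfrel : WellFounded (fun a b : {v : ℕ // v < G.n} => G.step b.1 a.1) := by
    have hfin : Finite {v : ℕ // v < G.n} :=
      Finite.of_injective (fun x => (⟨x.1, x.2⟩ : Fin G.n))
        (fun a b h => Subtype.ext (by simpa [Fin.ext_iff] using h))
    have htg : ∀ {a b : {v : ℕ // v < G.n}},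
        Relation.TransGen (fun a b : {v : ℕ // v < G.n} => G.step b.1 a.1) a b →
          Relation.TransGen G.step b.1 a.1 := by
      intro a b h
      induction h with
      | single h1 => exact Relation.TransGen.single h1
      | tail _ h2 ih => exact Relation.TransGen.head h2 ih
    have ht : IsTrans {v : ℕ // v < G.n}
        (Relation.TransGen (fun a b : {v : ℕ // v < G.n} => G.step b.1 a.1)) :=
      ⟨fun _ _ _ => Relation.TransGen.trans⟩
    have hi : IsIrrefl {v : ℕ // v < G.n}
        (Relation.TransGen (fun a b : {v : ℕ // v < G.n} => G.step b.1 a.1)) :=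
      ⟨fun a ha => hacyc a.1 (htg ha)⟩
    exact Subrelation.wf
      (r := Relation.TransGen (fun a b : {v : ℕ // v < G.n} => G.step b.1 a.1))
      (fun h => Relation.TransGen.single h)
      (@Finite.wellFounded_of_trans_of_irrefl _ hfin _ ht hi)
  have main : ∀ v : {v : ℕ // v < G.n}, ∃ P tt, G.chainFrom v.1 P tt ∧ G.IsTerminal tt ∧
      tt < G.n ∧ ∀ e ∈ P, ∀ a : ℕ, G.label e.1 = Sum.inl a → e.2 = choice a := by
    intro v
    refine hwfrel.induction (C := fun v => ∃ P tt, G.chainFrom v.1 P tt ∧ G.IsTerminal tt ∧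
      tt < G.n ∧ ∀ e ∈ P, ∀ a : ℕ, G.label e.1 = Sum.inl a → e.2 = choice a) v ?_
    rintro ⟨v, hv⟩ ih
    by_cases hterm : G.IsTerminal v
    · exact ⟨[], v, rfl, hterm, hv, by simp⟩
    · have hn := hnode v hv
      rw [if_neg hterm] at hn
      obtain ⟨a, hlab, haS, hiff, huniq⟩ := hn
      obtain ⟨w, hw⟩ := (hiff (choice a)).2 (hch a haS)
      have hwlt : w < G.n := (hedge _ hw).2
      obtain ⟨P, tt, hchain, ht1, ht2, hprop⟩ := ih ⟨w, hwlt⟩ ⟨choice a, hw⟩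
      refine ⟨(v, choice a) :: P, tt, ⟨rfl, w, hw, hchain⟩, ht1, ht2, ?_⟩
      rintro e he a' hlab'
      rcases List.mem_cons.1 he with rfl | he'
      · simp only at hlab' ⊢
        rw [hlab] at hlab'
        injection hlab' with h
        rw [← h]
      · exact hprop e he' a' hlab'
  obtain ⟨P, tt, hchain, ht1, ht2, hprop⟩ := main ⟨G.root, hroot⟩
  exact ⟨P, tt, ⟨hchain, ht1, ht2⟩, hprop⟩

lemma pathEqs_vals {G : DGraph} {P : List (ℕ × Option ℕ)} {choice : ℕ → Option ℕ}
    (hprop : ∀ e ∈ P, ∀ a : ℕ, G.label e.1 = Sum.inl a → e.2 = choice a) :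
    ∀ q ∈ G.pathEqs P, q.2 = choice q.1 := by
  intro q hq
  rw [DGraph.pathEqs, List.mem_toFinset, List.mem_filterMap] at hq
  obtain ⟨e, he, hval⟩ := hq
  rcases hlab : G.label e.1 with a | Z
  · rw [hlab] at hval
    simp only [Sum.elim_inl, Option.some.injEq] at hval
    subst hval
    exact hprop e he a hlab
  · rw [hlab] at hval
    simp at hval

lemma pathEqs_consistent {G : DGraph} {P : List (ℕ × Option ℕ)} {choice : ℕ → Option ℕ}
    (hprop : ∀ e ∈ P, ∀ a : ℕ, G.label e.1 = Sum.inl a → e.2 = choice a) :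
    ConsistentE (G.pathEqs P) := by
  intro p hp q hq h
  rw [pathEqs_vals hprop p hp, pathEqs_vals hprop q hq, h]

lemma card_pathEqs_le (G : DGraph) (P : List (ℕ × Option ℕ)) :
    (G.pathEqs P).card ≤ P.length := by
  rw [DGraph.pathEqs]
  exact le_trans (List.toFinset_card_le _) (List.length_filterMap_le _ _)

/-! ### All complete paths have length at most n -/

lemma chain_reflTransGen {G : DGraph} : ∀ (P : List (ℕ × Option ℕ)) (v tt : ℕ),
    G.chainFrom v P tt → ∀ e ∈ P, Relation.ReflTransGen G.step v e.1 := by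
  intro P
  induction P with
  | nil => intro v tt _ e he; simp at he
  | cons e0 rest ih =>
    intro v tt hchain e he
    obtain ⟨h1, w, hw, hchain'⟩ := hchain
    rcases List.mem_cons.1 he with rfl | he'
    · rw [h1]
    · exact Relation.ReflTransGen.head ⟨e0.2, h1 ▸ hw⟩ (ih w tt hchain' e he')

lemma chain_nodup {G : DGraph} (hacyc : G.Acyclic) : ∀ (P : List (ℕ × Option ℕ)) (v tt : ℕ),
    G.chainFrom v P tt → (P.map Prod.fst).Nodup := by
  intro P
  induction P with
  | nil => intro _ _ _; simp
  | cons e0 rest ih =>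
    intro v tt hchain
    obtain ⟨h1, w, hw, hchain'⟩ := hchain
    rw [List.map_cons, List.nodup_cons]
    refine ⟨?_, ih w tt hchain'⟩
    intro hmem
    rw [List.mem_map] at hmem
    obtain ⟨e, he, heq⟩ := hmem
    have hrt : Relation.ReflTransGen G.step w e.1 := chain_reflTransGen rest w tt hchain' e he
    rw [heq, h1] at hrt
    exact hacyc v (Relation.TransGen.head' ⟨e0.2, h1 ▸ hw⟩ hrt)

lemma chain_mem_edge {G : DGraph} : ∀ (P : List (ℕ × Option ℕ)) (v tt : ℕ),
    G.chainFrom v P tt → ∀ e ∈ P, ∃ w, (e.1, e.2, w) ∈ G.edges := by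
  intro P
  induction P with
  | nil => intro _ _ _ e he; simp at he
  | cons e0 rest ih =>
    intro v tt hchain e he
    obtain ⟨h1, w, hw, hchain'⟩ := hchain
    rcases List.mem_cons.1 he with rfl | he'
    · exact ⟨w, by rw [h1]; exact hw⟩
    · exact ih w tt hchain' e he'

lemma path_length_le {S : Finset Rule} {G : DGraph} (hdg : G.IsDG S true)
    {P : List (ℕ × Option ℕ)} {tt : ℕ} (h : G.IsCompletePath P tt) : P.length ≤ G.n := by
  obtain ⟨hchain, -, -⟩ := h
  have hnodup : (P.map Prod.fst).Nodup := chain_nodup hdg.2.2.1 P G.root tt hchain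
  have hlt : ∀ x ∈ P.map Prod.fst, x < G.n := by
    intro x hx
    rw [List.mem_map] at hx
    obtain ⟨e, he, rfl⟩ := hx
    obtain ⟨w, hw⟩ := chain_mem_edge P G.root tt hchain e he
    exact (hdg.2.1 _ hw).1
  have hsub : (P.map Prod.fst).toFinset ⊆ Finset.range G.n := by
    intro x hx
    rw [List.mem_toFinset] at hx
    exact Finset.mem_range.2 (hlt x hx)
  have := Finset.card_le_card hsub
  rw [List.toFinset_card_of_nodup hnodup] at this
  simpa using this

/-! ### Lower bounds -/

lemma le_depth {S : Finset Rule} {G : DGraph} (hdg : G.IsDG S true)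
    {P : List (ℕ × Option ℕ)} {tt : ℕ} (h : G.IsCompletePath P tt) :
    P.length ≤ G.depth := by
  apply le_csSup
  · refine ⟨G.n, ?_⟩
    rintro m ⟨P', tt', h', rfl⟩
    exact path_length_le hdg h'
  · exact ⟨P, tt, h, rfl⟩

lemma mem_VS {S : Finset Rule} {r : Rule} (hr : r ∈ S) {x δ : ℕ} (hK : (x, δ) ∈ r.K) :
    δ ∈ VS S x := by
  rw [VS, Finset.mem_image]
  exact ⟨(x, δ), Finset.mem_filter.2 ⟨Finset.mem_biUnion.2 ⟨r, hr, hK⟩, rfl⟩, rfl⟩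

lemma some_mem_allowed {S : Finset Rule} {x δ : ℕ} (h : δ ∈ VS S x) :
    some δ ∈ allowed S true x := by
  rw [allowed]
  exact Finset.mem_union_left _ (Finset.mem_image.2 ⟨δ, h, rfl⟩)

lemma dPar_le_depth {S : Finset Rule} (hS : S.Nonempty) (hwf : ∀ r ∈ S, r.WF)
    {G : DGraph} (hdg : G.IsDG S true) (hsolve : G.SolvesAR S) :
    dPar S ≤ G.depth := by
  obtain ⟨r, hr, hdeq⟩ := Finset.exists_mem_eq_sup S hS Rule.len
  set choice : ℕ → Option ℕ :=
    fun x => if h : ∃ δ, (x, δ) ∈ r.K then some h.choose else none with hchoice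
  have hkey : ∀ x δ, (x, δ) ∈ r.K → choice x = some δ := by
    intro x δ hx
    have hex : ∃ δ, (x, δ) ∈ r.K := ⟨δ, hx⟩
    rw [hchoice]
    simp only [dif_pos hex]
    have h := hwf r hr (x, hex.choose) hex.choose_spec (x, δ) hx rfl
    have h2 : hex.choose = δ := congrArg Prod.snd h
    rw [h2]
  have hch : ∀ a ∈ attrs S, choice a ∈ allowed S true a := by
    intro a _
    rw [hchoice]
    by_cases hex : ∃ δ, (a, δ) ∈ r.K
    · simp only [dif_pos hex]
      exact some_mem_allowed (mem_VS hr hex.choose_spec)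
    · simp only [dif_neg hex]
      exact none_mem_allowed S a
  obtain ⟨P, tt, hcp, hprop⟩ := exists_run G hdg choice hch
  have hvals := pathEqs_vals hprop
  have hconsP := pathEqs_consistent hprop
  have hconsU : ConsistentE (liftK r.K ∪ G.pathEqs P) := by
    intro p hp q hq heq
    have hval : ∀ z ∈ liftK r.K ∪ G.pathEqs P, z.2 = choice z.1 := by
      intro z hz
      rcases Finset.mem_union.1 hz with hz | hz
      · rw [liftK, Finset.mem_image] at hz
        obtain ⟨x, hx, rfl⟩ := hz
        exact (hkey x.1 x.2 hx).symm
      · exact hvals z hz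
    rw [hval p hp, hval q hq, heq]
  obtain ⟨h1, h2⟩ := hsolve P tt hcp hconsP
  have hrterm : r ∈ G.termSet tt := by
    by_contra hno
    exact h2 r hr hno hconsU
  have hsub := h1 r hrterm
  calc dPar S = r.len := hdeq
    _ = (liftK r.K).card := (card_liftK r.K).symm
    _ ≤ (G.pathEqs P).card := Finset.card_le_card hsub
    _ ≤ P.length := card_pathEqs_le G P
    _ ≤ G.depth := le_depth hdg hcp

lemma beta_EAR_le_depth {S : Finset Rule} (hwf : ∀ r ∈ S, r.WF)
    {G : DGraph} (hdg : G.IsDG S true) (hsolve : G.SolvesAR S) :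
    beta_EAR S ≤ G.depth := by
  apply csSup_le'
  rintro b ⟨α, hα, rfl⟩
  set choice : ℕ → Option ℕ :=
    fun x => if h : ∃ v, (x, v) ∈ α then h.choose else none with hchoice
  have hkey : ∀ x v, (x, v) ∈ α → choice x = v := by
    intro x v hx
    have hex : ∃ v, (x, v) ∈ α := ⟨v, hx⟩
    rw [hchoice]
    simp only [dif_pos hex]
    exact hα.1 (x, hex.choose) hex.choose_spec (x, v) hx rfl
  have hch : ∀ a ∈ attrs S, choice a ∈ allowed S true a := by
    intro a _
    rw [hchoice]
    by_cases hex : ∃ v, (a, v) ∈ α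
    · simp only [dif_pos hex]
      exact (hα.2 (a, hex.choose) hex.choose_spec).2
    · simp only [dif_neg hex]
      exact none_mem_allowed S a
  obtain ⟨P, tt, hcp, hprop⟩ := exists_run G hdg choice hch
  have hvals := pathEqs_vals hprop
  have hconsP := pathEqs_consistent hprop
  set B := ((G.pathEqs P).image Prod.fst) ∩ attrs (restrict S α) with hB
  have hcover : IsNodeCover (restrict S α) B := by
    refine ⟨Finset.inter_subset_right, ?_⟩
    intro r' hr' hne
    by_contra hempty
    rw [Finset.not_nonempty_iff_eq_empty] at hempty
    -- r' comes from some r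
    simp only [restrict, Finset.mem_image, Finset.mem_filter] at hr'
    obtain ⟨r, ⟨hrS, hconsα⟩, rfl⟩ := hr'
    have hattr_sub : Rule.attrs (r.restrict α) ⊆ attrs (restrict S α) := by
      intro x hx
      rw [attrs, Finset.mem_biUnion]
      refine ⟨r.restrict α, ?_, hx⟩
      simp only [restrict, Finset.mem_image, Finset.mem_filter]
      exact ⟨r, ⟨hrS, hconsα⟩, rfl⟩
    have hnopath : ∀ x ∈ Rule.attrs (r.restrict α), x ∉ (G.pathEqs P).image Prod.fst := by
      intro x hx hpx
      have : x ∈ Rule.attrs (r.restrict α) ∩ B := by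
        rw [hB, Finset.mem_inter]
        exact ⟨hx, Finset.mem_inter.2 ⟨hpx, hattr_sub hx⟩⟩
      rw [hempty] at this
      simp at this
    have hconsU : ConsistentE (liftK r.K ∪ G.pathEqs P) := by
      have hmixed : ∀ x δ c, (x, δ) ∈ r.K → ((x : ℕ), c) ∈ G.pathEqs P → some δ = c := by
        intro x δ c hxK hxP
        by_cases hmem : ((x : ℕ), some δ) ∈ α
        · have h1 : choice x = some δ := hkey x (some δ) hmem
          have h2 : c = choice x := hvals (x, c) hxP
          rw [h2, h1]
        · exfalso
          have hxr' : x ∈ Rule.attrs (r.restrict α) := by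
            rw [Rule.attrs, Finset.mem_image]
            refine ⟨(x, δ), ?_, rfl⟩
            rw [Rule.restrict, Finset.mem_filter]
            exact ⟨hxK, hmem⟩
          exact hnopath x hxr' (Finset.mem_image.2 ⟨(x, c), hxP, rfl⟩)
      intro p hp q hq heq
      rcases Finset.mem_union.1 hp with hp1 | hp1 <;> rcases Finset.mem_union.1 hq with hq1 | hq1
      · exact liftK_consistent (hwf r hrS) p hp1 q hq1 heq
      · rw [liftK, Finset.mem_image] at hp1
        obtain ⟨x, hx, rfl⟩ := hp1
        simp only at heq ⊢
        have hqmem : (x.1, q.2) ∈ G.pathEqs P := by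
          have hq2 : (x.1, q.2) = q := Prod.ext heq rfl
          rw [hq2]; exact hq1
        exact hmixed x.1 x.2 q.2 hx hqmem
      · rw [liftK, Finset.mem_image] at hq1
        obtain ⟨x, hx, rfl⟩ := hq1
        simp only at heq ⊢
        have hpmem : (x.1, p.2) ∈ G.pathEqs P := by
          have hp2 : (x.1, p.2) = p := Prod.ext heq.symm rfl
          rw [hp2]; exact hp1
        exact (hmixed x.1 x.2 p.2 hx hpmem).symm
      · exact hconsP p hp1 q hq1 heq
    obtain ⟨h1, h2⟩ := hsolve P tt hcp hconsP
    have hrterm : r ∈ G.termSet tt := by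
      by_contra hno
      exact h2 r hrS hno hconsU
    have hsub := h1 r hrterm
    obtain ⟨x, hx⟩ := hne
    rw [Rule.attrs, Finset.mem_image] at hx
    obtain ⟨⟨x', δ⟩, hxK', hxx⟩ := hx
    simp only at hxx
    subst hxx
    rw [Rule.restrict, Finset.mem_filter] at hxK'
    obtain ⟨hxK, hxα⟩ := hxK'
    have hinP : ((x' : ℕ), some δ) ∈ G.pathEqs P :=
      hsub (Finset.mem_image.2 ⟨(x', δ), hxK, rfl⟩)
    apply hnopath x'
    · rw [Rule.attrs, Finset.mem_image]
      refine ⟨(x', δ), ?_, rfl⟩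
      rw [Rule.restrict, Finset.mem_filter]
      exact ⟨hxK, hxα⟩
    · exact Finset.mem_image.2 ⟨(x', some δ), hinP, rfl⟩
  have hle : beta (restrict S α) ≤ B.card := Nat.sInf_le ⟨B, hcover, rfl⟩
  calc beta (restrict S α) ≤ B.card := hle
    _ ≤ ((G.pathEqs P).image Prod.fst).card := Finset.card_le_card Finset.inter_subset_left
    _ ≤ (G.pathEqs P).card := Finset.card_image_le
    _ ≤ P.length := card_pathEqs_le G P
    _ ≤ G.depth := le_depth hdg hcp

/-- Theorem 4(b): max{d(S), β_EAR(S)} ≤ h_EAR(S) ≤ d(S)·β_EAR⁺(S). -/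
theorem statement_16 (S : Finset Rule) (hS : S.Nonempty) (hwf : ∀ r ∈ S, r.WF)
    (hn : 0 < nPar S) :
    max (dPar S) (beta_EAR S) ≤ h_EAR S ∧ h_EAR S ≤ dPar S * beta_EARplus S := by
  constructor
  · have hne : {m | ∃ G : DGraph, TreeSolvesEAR S G ∧ G.depth = m}.Nonempty := by
      obtain ⟨G, hG, -⟩ := upper_bound S hwf
      exact ⟨G.depth, G, hG, rfl⟩
    apply le_csInf hne
    rintro m ⟨G, ⟨hdg, htree, hsolve⟩, rfl⟩
    exact max_le (dPar_le_depth hS hwf hdg hsolve) (beta_EAR_le_depth hwf hdg hsolve)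
  · exact h_EAR_le S hwf
end DRS
end
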